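/- Let G be a finite group and x an involution of G (an element of order 2). Then the subgroup ⟨x⟩ generated by x is a perfect code of G if and only if x is not a square of G, i.e. there is no y ∈ G with y² = x. -/

import Mathlib

/-- The Cayley graph of a group `G` with connection set `S`: distinct vertices `x`, `y`
are adjacent iff `y * x⁻¹ ∈ S` (for inverse-closed `S` this relation is symmetric). -/
def cayley (G : Type*) [Group G] (S : Set G) : SimpleGraph G :=
  SimpleGraph.fromRel (fun x y => y * x⁻¹ ∈ S)

/-- `C` is a perfect code in the graph `Γ`: `C` is an independent set and every vertex
outside `C` is adjacent to exactly one vertex of `C`. -/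
def IsPerfectCode {V : Type*} (Γ : SimpleGraph V) (C : Set V) : Prop :=
  (∀ u ∈ C, ∀ v ∈ C, ¬ Γ.Adj u v) ∧ ∀ v ∉ C, ∃! u, u ∈ C ∧ Γ.Adj v u

/-- `C` is a perfect code of the group `G`: there is an inverse-closed `S ⊆ G` with
`1 ∉ S` such that `C` is a perfect code in `Cay(G, S)`. -/
def IsPerfectCodeOfGroup (G : Type*) [Group G] (C : Set G) : Prop :=
  ∃ S : Set G, S⁻¹ = S ∧ (1 : G) ∉ S ∧ IsPerfectCode (cayley G S) C

namespace PCaux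
open Relation

variable {G : Type*} [Group G]

def rel (x : G) (a b : G) : Prop := b = a * x ∨ b = x * a ∨ b = a⁻¹

def Eset (x g₀ : G) : Set G := {g₀, x * g₀ * x, g₀⁻¹, x * g₀⁻¹ * x}
def Odset (x g₀ : G) : Set G := {g₀ * x, x * g₀, g₀⁻¹ * x, x * g₀⁻¹}
def Tset (x g₀ : G) : Set G := Eset x g₀ ∪ Odset x g₀

noncomputable def rep (x : G) (g : G) : G :=
  (Quotient.mk (EqvGen.setoid (rel x)) g).out

lemma eqv_rep (x g : G) : EqvGen (rel x) (rep x g) g :=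
  Quotient.mk_out (s := EqvGen.setoid (rel x)) g

lemma rep_eq_of_rel {x a b : G} (h : rel x a b) : rep x a = rep x b := by
  unfold rep
  congr 1
  exact Quotient.sound (EqvGen.rel _ _ h)

lemma transport {x : G} {P : G → Prop} (hP : ∀ a b, rel x a b → (P a ↔ P b)) :
    ∀ a b, EqvGen (rel x) a b → (P a ↔ P b) := by
  intro a b h
  induction h with
  | rel a b hab => exact hP a b hab
  | refl => exact Iff.rfl
  | symm _ _ _ ih => exact ih.symm
  | trans _ _ _ _ _ ih1 ih2 => exact ih1.trans ih2

section
variable {x : G} (hx2 : x * x = 1)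
include hx2

lemma hxi : x⁻¹ = x := by rw [inv_eq_iff_mul_eq_one, hx2]
lemma hxx (t : G) : x * (x * t) = t := by rw [← mul_assoc, hx2, one_mul]

lemma E_inv {g₀ a : G} (ha : a ∈ Eset x g₀) : a⁻¹ ∈ Eset x g₀ := by
  simp only [Eset, Set.mem_insert_iff, Set.mem_singleton_iff] at ha ⊢
  rcases ha with h|h|h|h <;> subst h <;> simp [mul_assoc, hx2, hxx hx2, hxi hx2, mul_inv_rev]

lemma E_mulx {g₀ a : G} (ha : a ∈ Eset x g₀) : a * x ∈ Odset x g₀ := by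
  simp only [Eset, Odset, Set.mem_insert_iff, Set.mem_singleton_iff] at ha ⊢
  rcases ha with h|h|h|h <;> subst h <;> simp [mul_assoc, hx2, hxx hx2, hxi hx2, mul_inv_rev]

lemma Od_mulx {g₀ a : G} (ha : a ∈ Odset x g₀) : a * x ∈ Eset x g₀ := by
  simp only [Eset, Odset, Set.mem_insert_iff, Set.mem_singleton_iff] at ha ⊢
  rcases ha with h|h|h|h <;> subst h <;> simp [mul_assoc, hx2, hxx hx2, hxi hx2, mul_inv_rev]

lemma T_step (g₀ : G) (a : G) (ha : a ∈ Tset x g₀) :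
    a * x ∈ Tset x g₀ ∧ x * a ∈ Tset x g₀ ∧ a⁻¹ ∈ Tset x g₀ := by
  simp only [Tset, Eset, Odset, Set.mem_union, Set.mem_insert_iff, Set.mem_singleton_iff] at ha ⊢
  rcases ha with ((h|h|h|h)|(h|h|h|h)) <;> subst h <;>
    refine ⟨?_, ?_, ?_⟩ <;>
    simp [mul_assoc, hx2, hxx hx2, hxi hx2, mul_inv_rev]

lemma T_rel (g₀ : G) : ∀ a b, rel x a b → (a ∈ Tset x g₀ ↔ b ∈ Tset x g₀) := by
  rintro a b (rfl | rfl | rfl)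
  · constructor
    · exact fun ha => (T_step hx2 g₀ a ha).1
    · intro hb
      have := (T_step hx2 g₀ _ hb).1
      simpa [mul_assoc, hx2] using this
  · constructor
    · exact fun ha => (T_step hx2 g₀ a ha).2.1
    · intro hb
      have := (T_step hx2 g₀ _ hb).2.1
      simpa [hxx hx2] using this
  · constructor
    · exact fun ha => (T_step hx2 g₀ a ha).2.2
    · intro hb
      have := (T_step hx2 g₀ _ hb).2.2
      simpa using this

lemma mem_T_of_eqv {g₀ g : G} (h : EqvGen (rel x) g₀ g) : g ∈ Tset x g₀ :=
  (transport (T_rel hx2 g₀) g₀ g h).mp (by simp [Tset, Eset])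

lemma notH_rel : ∀ a b, rel x a b → ((a ≠ 1 ∧ a ≠ x) ↔ (b ≠ 1 ∧ b ≠ x)) := by
  rintro a b (rfl | rfl | rfl)
  · constructor
    · rintro ⟨h1, h2⟩
      refine ⟨fun h => h2 ?_, fun h => h1 (mul_eq_right.mp h)⟩
      rw [mul_eq_one_iff_eq_inv, hxi hx2] at h
      exact h
    · rintro ⟨h1, h2⟩
      exact ⟨fun h => h2 (by rw [h, one_mul]), fun h => h1 (by rw [h]; exact hx2)⟩
  · constructor
    · rintro ⟨h1, h2⟩
      refine ⟨fun h => h2 ?_, fun h => h1 (mul_eq_left.mp h)⟩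
      rw [mul_eq_one_iff_inv_eq, hxi hx2] at h
      exact h.symm
    · rintro ⟨h1, h2⟩
      exact ⟨fun h => h2 (by rw [h, mul_one]), fun h => h1 (by rw [h]; exact hx2)⟩
  · constructor
    · rintro ⟨h1, h2⟩
      refine ⟨fun h => h1 (inv_eq_one.mp h), fun h => h2 ?_⟩
      rw [← hxi hx2, inv_inj] at h
      exact h
    · rintro ⟨h1, h2⟩
      refine ⟨fun h => h1 (by rw [h, inv_one]), fun h => h2 (by rw [h, hxi hx2])⟩

lemma notH_of_eqv {a b : G} (h : EqvGen (rel x) a b) (ha : a ≠ 1 ∧ a ≠ x) :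
    b ≠ 1 ∧ b ≠ x :=
  (transport (notH_rel hx2) a b h).mp ha

end

lemma EOd_disj {x : G} (hx1 : x ≠ 1) (hns : ∀ y : G, y * y ≠ x) {g₀ a : G}
    (hE : a ∈ Eset x g₀) (hO : a ∈ Odset x g₀) : False := by
  simp only [Eset, Odset, Set.mem_insert_iff, Set.mem_singleton_iff] at hE hO
  rcases hE with h0|h0|h0|h0 <;> rcases hO with h1|h1|h1|h1 <;>
      (have h := h0.symm.trans h1; clear h0 h1)
  · exact hx1 (mul_left_cancel (a := g₀) (by rw [mul_one]; exact h)).symm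
  · exact hx1 (mul_right_cancel (b := g₀) (by rw [one_mul]; exact h)).symm
  · exact hns g₀ (by simpa using congrArg (g₀ * ·) h)
  · exact hns g₀ (by simpa using congrArg (· * g₀) h)
  · have h1 : x * g₀ = g₀ := mul_right_cancel h
    exact hx1 (mul_right_cancel (b := g₀) (by rw [one_mul]; exact h1))
  · exact hx1 (mul_left_cancel (a := x * g₀) (by rw [mul_one]; exact h))
  · have h1 : x * g₀ = g₀⁻¹ := mul_right_cancel h
    exact hns g₀⁻¹ (by simpa using (congrArg (· * g₀⁻¹) h1).symm)
  · rw [mul_assoc] at h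
    have h1 : g₀ * x = g₀⁻¹ := mul_left_cancel h
    exact hns g₀⁻¹ (by simpa using (congrArg (g₀⁻¹ * ·) h1).symm)
  · exact hns g₀⁻¹ (by simpa using congrArg (g₀⁻¹ * ·) h)
  · exact hns g₀⁻¹ (by simpa using congrArg (· * g₀⁻¹) h)
  · exact hx1 (mul_left_cancel (a := g₀⁻¹) (by rw [mul_one]; exact h)).symm
  · exact hx1 (mul_right_cancel (b := g₀⁻¹) (by rw [one_mul]; exact h)).symm
  · have h1 : x * g₀⁻¹ = g₀ := mul_right_cancel h
    exact hns g₀ (by simpa using (congrArg (· * g₀) h1).symm)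
  · rw [mul_assoc] at h
    have h1 : g₀⁻¹ * x = g₀ := mul_left_cancel h
    exact hns g₀ (by simpa using (congrArg (g₀ * ·) h1).symm)
  · have h1 : x * g₀⁻¹ = g₀⁻¹ := mul_right_cancel h
    exact hx1 (mul_right_cancel (b := g₀⁻¹) (by rw [one_mul]; exact h1))
  · exact hx1 (mul_left_cancel (a := x * g₀⁻¹) (by rw [mul_one]; exact h))

noncomputable def Sset (x : G) : Set G := {g | g ≠ 1 ∧ g ≠ x ∧ g ∈ Eset x (rep x g)}

lemma S_inv_mem {x : G} (hx2 : x * x = 1) {g : G} (hg : g ∈ Sset x) : g⁻¹ ∈ Sset x := by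
  obtain ⟨h1, h2, hE⟩ := hg
  refine ⟨inv_ne_one.mpr h1, fun h => h2 (by rw [← hxi hx2, inv_inj] at h; exact h), ?_⟩
  have hrep : rep x g⁻¹ = rep x g := (rep_eq_of_rel (Or.inr (Or.inr rfl))).symm
  rw [hrep]
  exact E_inv hx2 hE

lemma S_flip {x : G} (hx2 : x * x = 1) (hx1 : x ≠ 1) (hns : ∀ y : G, y * y ≠ x)
    {g : G} (hg1 : g ≠ 1) (hgx : g ≠ x) :
    g ∈ Sset x ↔ g * x ∉ Sset x := by
  have hrep : rep x g = rep x (g * x) := rep_eq_of_rel (Or.inl rfl)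
  have hT : g ∈ Tset x (rep x g) := mem_T_of_eqv hx2 (eqv_rep x g)
  have hgx1 : g * x ≠ 1 := fun h => hgx (by rw [mul_eq_one_iff_eq_inv, hxi hx2] at h; exact h)
  have hgxx : g * x ≠ x := fun h => hg1 (mul_eq_right.mp h)
  have hmem : g ∈ Sset x ↔ g ∈ Eset x (rep x g) := by simp [Sset, hg1, hgx]
  have hmem2 : g * x ∈ Sset x ↔ g * x ∈ Eset x (rep x g) := by
    simp [Sset, hgx1, hgxx, ← hrep]
  rcases hT with hE | hO
  · rw [hmem, hmem2]
    have hOd : g * x ∈ Odset x (rep x g) := E_mulx hx2 hE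
    exact ⟨fun _ hc => EOd_disj hx1 hns hc hOd, fun _ => hE⟩
  · rw [hmem, hmem2]
    have hE' : g * x ∈ Eset x (rep x g) := Od_mulx hx2 hO
    exact ⟨fun hc => absurd hc (fun hc => EOd_disj hx1 hns hc hO), fun hc => absurd hE' hc⟩

end PCaux



/-- For an involution `x` of a finite group `G`, the subgroup `⟨x⟩` is a perfect code
of `G` iff `x` is not a square of `G`. -/
theorem involution_subgroup_perfect_code_iff (G : Type*) [Group G] [Fintype G]
    (x : G) (hx : orderOf x = 2) :
    IsPerfectCodeOfGroup G ((Subgroup.zpowers x) : Set G) ↔ ¬ ∃ y : G, y ^ 2 = x := by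
  have hx2 : x * x = 1 := by
    have h := pow_orderOf_eq_one x
    rw [hx, sq] at h
    exact h
  have hx1 : x ≠ 1 := by
    intro h
    rw [h, orderOf_one] at hx
    omega
  have hxinv : x⁻¹ = x := by rw [inv_eq_iff_mul_eq_one, hx2]
  have hC : ∀ g : G, g ∈ ((Subgroup.zpowers x : Subgroup G) : Set G) ↔ g = 1 ∨ g = x := by
    intro g
    constructor
    · intro hg
      rw [SetLike.mem_coe, Subgroup.mem_zpowers_iff] at hg
      obtain ⟨k, rfl⟩ := hg
      have hxz : x ^ (2 : ℤ) = 1 := by rw [zpow_two, hx2]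
      have hk : x ^ k = x ^ (k % 2) := by
        conv_lhs => rw [← Int.mul_ediv_add_emod k 2]
        rw [zpow_add, zpow_mul, hxz, one_zpow, one_mul]
      rcases Int.emod_two_eq k with h | h <;> rw [hk, h]
      · exact Or.inl (zpow_zero x)
      · exact Or.inr (zpow_one x)
    · intro hg
      rcases hg with h | h <;> subst h
      · exact Subgroup.one_mem _
      · exact Subgroup.mem_zpowers _
  constructor
  · rintro ⟨S, hSinv, hS1, hind, huniq⟩ ⟨y, hy⟩
    rw [sq] at hy
    have hinvS : ∀ g : G, g ∈ S → g⁻¹ ∈ S := by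
      intro g hg
      rw [← hSinv, Set.mem_inv, inv_inv]
      exact hg
    have hy1 : y ≠ 1 := fun h => hx1 (by rw [← hy, h, one_mul])
    have hyx : y ≠ x := fun h => hx1 (by rw [← hy, h]; exact hx2)
    have hyC : y ∉ ((Subgroup.zpowers x : Subgroup G) : Set G) := by
      rw [hC]
      rintro (h | h)
      · exact hy1 h
      · exact hyx h
    obtain ⟨u, hu, huni⟩ := huniq y hyC
    by_cases hyS : y ∈ S
    · have h1 : (1:G) ∈ ((Subgroup.zpowers x : Subgroup G) : Set G) ∧ (cayley G S).Adj y 1 := by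
        refine ⟨(hC 1).mpr (Or.inl rfl), ?_⟩
        rw [cayley, SimpleGraph.fromRel_adj]
        exact ⟨hy1, Or.inr (by simpa using hyS)⟩
      have h2 : x ∈ ((Subgroup.zpowers x : Subgroup G) : Set G) ∧ (cayley G S).Adj y x := by
        refine ⟨(hC x).mpr (Or.inr rfl), ?_⟩
        rw [cayley, SimpleGraph.fromRel_adj]
        refine ⟨hyx, Or.inl ?_⟩
        show x * y⁻¹ ∈ S
        rw [← hy, mul_inv_cancel_right]
        exact hyS
      exact hx1 ((huni x h2).trans (huni 1 h1).symm)
    · obtain ⟨huC, huAdj⟩ := hu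
      rw [cayley, SimpleGraph.fromRel_adj] at huAdj
      rcases (hC u).mp huC with h0 | h0 <;> subst h0
      · rcases huAdj.2 with h | h
        · refine hyS ?_
          have h' : y⁻¹ ∈ S := by simpa using h
          simpa using hinvS _ h'
        · exact hyS (by simpa using h)
      · rcases huAdj.2 with h | h
        · refine hyS ?_
          show y ∈ S
          rwa [← hy, mul_inv_cancel_right] at h
        · refine hyS ?_
          have h2 := hinvS _ h
          rw [mul_inv_rev, inv_inv] at h2
          rwa [← hy, mul_inv_cancel_right] at h2
  · intro hns'
    have hns : ∀ y : G, y * y ≠ x := fun y h => hns' ⟨y, by rw [sq]; exact h⟩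
    have hSne : ∀ w : G, w ∈ PCaux.Sset x → w ≠ 1 ∧ w ≠ x := fun w hw => ⟨hw.1, hw.2.1⟩
    refine ⟨PCaux.Sset x, ?_, fun h => h.1 rfl, ?_, ?_⟩
    · ext g
      rw [Set.mem_inv]
      constructor
      · intro h
        simpa using PCaux.S_inv_mem hx2 h
      · exact PCaux.S_inv_mem hx2
    · intro u huC v hvC hAdj
      rw [cayley, SimpleGraph.fromRel_adj] at hAdj
      obtain ⟨hne, hor⟩ := hAdj
      rcases (hC u).mp huC with h1 | h1 <;> rcases (hC v).mp hvC with h2 | h2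
      · exact hne (h1.trans h2.symm)
      · subst h1; subst h2
        rcases hor with h | h
        · rw [inv_one, mul_one] at h
          exact (hSne _ h).2 rfl
        · rw [one_mul, hxinv] at h
          exact (hSne _ h).2 rfl
      · subst h1; subst h2
        rcases hor with h | h
        · rw [one_mul, hxinv] at h
          exact (hSne _ h).2 rfl
        · rw [inv_one, mul_one] at h
          exact (hSne _ h).2 rfl
      · exact hne (h1.trans h2.symm)
    · intro v hvC
      rw [hC] at hvC
      push_neg at hvC
      obtain ⟨hv1, hvx⟩ := hvC
      by_cases hvS : v ∈ PCaux.Sset x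
      · refine ⟨1, ⟨(hC 1).mpr (Or.inl rfl), ?_⟩, ?_⟩
        · rw [cayley, SimpleGraph.fromRel_adj]
          exact ⟨hv1, Or.inr (by simpa using hvS)⟩
        · intro u ⟨huC, huAdj⟩
          rcases (hC u).mp huC with h | h
          · exact h
          · exfalso
            have hvxS : v * x ∉ PCaux.Sset x := (PCaux.S_flip hx2 hx1 hns hv1 hvx).mp hvS
            rw [h, cayley, SimpleGraph.fromRel_adj] at huAdj
            rcases huAdj.2 with h | h
            · apply hvxS
              have h2 := PCaux.S_inv_mem hx2 h
              rwa [mul_inv_rev, inv_inv, hxinv] at h2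
            · apply hvxS
              rwa [hxinv] at h
      · have hvxS : v * x ∈ PCaux.Sset x := by
          by_contra h
          exact hvS ((PCaux.S_flip hx2 hx1 hns hv1 hvx).mpr h)
        refine ⟨x, ⟨(hC x).mpr (Or.inr rfl), ?_⟩, ?_⟩
        · rw [cayley, SimpleGraph.fromRel_adj]
          refine ⟨hvx, Or.inr ?_⟩
          show v * x⁻¹ ∈ PCaux.Sset x
          rwa [hxinv]
        · intro u ⟨huC, huAdj⟩
          rcases (hC u).mp huC with h | h
          · exfalso
            rw [h, cayley, SimpleGraph.fromRel_adj] at huAdj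
            rcases huAdj.2 with h | h
            · apply hvS
              have h' : v⁻¹ ∈ PCaux.Sset x := by simpa using h
              simpa using PCaux.S_inv_mem hx2 h'
            · exact hvS (by simpa using h)
          · exact h
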